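/- Let σ̄ be a d-simplex (d ≥ 2) in a simple directed graph G. Then there are exactly C(d+1, 2) = (d² + d)/2 almost-d-simplices contained in σ̄ which complete to σ̄; more precisely, the almost-d-simplices ({σ, σ'}, e) with σ, σ' faces of σ̄ whose unique completion (by Lemma 1) is σ̄ are in bijection with the C(d+1, 2) edges of σ̄ via ({σ, σ'}, e) ↦ e. -/
import Mathlib


def IsSimplex {V : Type*} (E : V → V → Prop) {m : ℕ} (σ : Fin m → V) : Prop :=
  Function.Injective σ ∧ ∀ i j : Fin m, i < j → E (σ i) (σ j)

def EdgSet {V : Type*} {m : ℕ} (σ : Fin m → V) : Set (V × V) :=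
  {p | ∃ i j : Fin m, i < j ∧ p = (σ i, σ j)}

def IsAlmostSimplex {V : Type*} (E : V → V → Prop) {m : ℕ}
    (σ σ' : Fin (m + 1) → V) (e : V × V) : Prop :=
  IsSimplex E σ ∧ IsSimplex E σ' ∧
  ∃ i i' : Fin (m + 1),
    σ ∘ i.succAbove = σ' ∘ i'.succAbove ∧
    σ i ≠ σ' i' ∧
    ((i ≤ i' ∧ e = (σ i, σ' i')) ∨ (i' ≤ i ∧ e = (σ' i', σ i)))

lemma card_lt_pairs (m : ℕ) : {p : Fin m × Fin m | p.1 < p.2}.ncard = m.choose 2 := by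
  have h1 : {p : Fin m × Fin m | p.1 < p.2} =
      ↑(Finset.univ.filter (fun p : Fin m × Fin m => p.1 < p.2)) := by
    ext p; simp
  rw [h1, Set.ncard_coe_finset]
  have h2 : (Finset.univ.filter (fun p : Fin m × Fin m => p.1 < p.2)).card
      = (Finset.univ.sigma (fun j : Fin m => Finset.Iio j)).card := by
    refine (Finset.card_bij (fun a _ => (a.2, a.1)) ?_ ?_ ?_).symm
    · intro a ha
      simp only [Finset.mem_sigma, Finset.mem_Iio] at ha
      simpa using ha.2
    · intro a ha b hb h
      simp only [Prod.mk.injEq] at h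
      exact Sigma.ext h.2 (heq_of_eq h.1)
    · intro p hp
      simp only [Finset.mem_filter] at hp
      exact ⟨⟨p.2, p.1⟩, by simpa using hp.2, rfl⟩
  rw [h2, Finset.card_sigma]
  simp only [Fin.card_Iio]
  rw [Fin.sum_univ_eq_sum_range (fun i => i) m, Finset.sum_range_id, Nat.choose_two_right]

lemma ncard_edgSet {V : Type*} {m : ℕ} {σ : Fin m → V} (hσ : Function.Injective σ) :
    (EdgSet σ).ncard = m.choose 2 := by
  have h1 : EdgSet σ = (fun p : Fin m × Fin m => (σ p.1, σ p.2)) '' {p | p.1 < p.2} := by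
    ext p
    constructor
    · rintro ⟨i, j, hij, rfl⟩; exact ⟨(i, j), hij, rfl⟩
    · rintro ⟨⟨i, j⟩, hij, rfl⟩; exact ⟨i, j, hij, rfl⟩
  rw [h1, Set.ncard_image_of_injOn, card_lt_pairs]
  intro a _ b _ h
  simp only [Prod.mk.injEq] at h
  exact Prod.ext (hσ h.1) (hσ h.2)

lemma strictMono_range_inj_fin {a b : ℕ} {f g : Fin a → Fin b}
    (hf : StrictMono f) (hg : StrictMono g) (h : Set.range f = Set.range g) : f = g :=
  (@StrictMono.range_inj (Fin a) (Fin b) _ _ (inferInstance : WellFoundedLT (Fin a)) f g hf hg).mp h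

lemma exists_eq_succAbove {m : ℕ} {f : Fin (m + 1) → Fin (m + 2)} (hf : StrictMono f) :
    ∃ k : Fin (m + 2), f = k.succAbove := by
  have hne : Set.range f ≠ Set.univ := by
    intro h
    have hsurj : Function.Surjective f := Set.range_eq_univ.mp h
    have := Fintype.card_le_of_surjective f hsurj
    simp at this
  obtain ⟨k, hk⟩ : ∃ k, k ∉ Set.range f := by
    by_contra h
    push_neg at h
    exact hne (Set.eq_univ_of_forall h)
  refine ⟨k, strictMono_range_inj_fin hf (Fin.strictMono_succAbove k) ?_⟩
  rw [Fin.range_succAbove]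
  apply Set.eq_of_subset_of_ncard_le ?_ ?_ (Set.toFinite _)
  · intro x hx hxk
    exact hk (hxk ▸ hx)
  · have h1 : ({k}ᶜ : Set (Fin (m + 2))).ncard = m + 1 := by
      rw [Set.ncard_eq_toFinset_card']
      simp [Finset.card_compl]
    have h2 : (Set.range f).ncard = m + 1 := by
      rw [← Set.image_univ, Set.ncard_image_of_injective _ hf.injective, Set.ncard_univ,
        Nat.card_eq_fintype_card, Fintype.card_fin]
    rw [h1, h2]

lemma face_of_edges {V : Type*} {n : ℕ} {σbar : Fin (n + 3) → V} (hinj : Function.Injective σbar)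
    {σ : Fin (n + 2) → V} (h : EdgSet σ ⊆ EdgSet σbar) :
    ∃ k : Fin (n + 3), σ = σbar ∘ k.succAbove := by
  have hv : ∀ a, ∃ p, σbar p = σ a := by
    intro a
    obtain ⟨b, hba⟩ := exists_ne a
    rcases lt_or_gt_of_ne hba with h1 | h1
    · obtain ⟨p, q, _, heq⟩ := h ⟨b, a, h1, rfl⟩
      simp only [Prod.mk.injEq] at heq
      exact ⟨q, heq.2.symm⟩
    · obtain ⟨p, q, _, heq⟩ := h ⟨a, b, h1, rfl⟩
      simp only [Prod.mk.injEq] at heq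
      exact ⟨p, heq.1.symm⟩
  choose f hf using hv
  have hmono : StrictMono f := by
    intro a b hab
    obtain ⟨p, q, hpq, heq⟩ := h ⟨a, b, hab, rfl⟩
    simp only [Prod.mk.injEq] at heq
    obtain ⟨h1, h2⟩ := heq
    have hpa : f a = p := hinj (by rw [hf a, h1])
    have hqb : f b = q := hinj (by rw [hf b, h2])
    rw [hpa, hqb]; exact hpq
  obtain ⟨k, hk⟩ := exists_eq_succAbove hmono
  refine ⟨k, funext fun a => ?_⟩
  rw [← hf a, hk]; rfl

lemma edg_face_mem {V : Type*} {n : ℕ} (σbar : Fin (n + 3) → V) (p : Fin (n + 3))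
    {a b : Fin (n + 3)} (hab : a < b) (ha : a ≠ p) (hb : b ≠ p) :
    (σbar a, σbar b) ∈ EdgSet (σbar ∘ p.succAbove) := by
  obtain ⟨a', rfl⟩ : a ∈ Set.range p.succAbove := by rw [Fin.range_succAbove]; exact ha
  obtain ⟨b', rfl⟩ : b ∈ Set.range p.succAbove := by rw [Fin.range_succAbove]; exact hb
  exact ⟨a', b', (Fin.strictMono_succAbove p).lt_iff_lt.mp hab, rfl⟩

lemma structure_lemma {V : Type*} [Fintype V] (E : V → V → Prop)
    {n : ℕ} {σbar : Fin (n + 3) → V} (hσbar : IsSimplex E σbar)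
    (x : Sym2 (Fin (n + 2) → V) × (V × V))
    (hx : ∃ σ σ', x.1 = s(σ, σ') ∧ IsAlmostSimplex E σ σ' x.2 ∧
        IsSimplex (fun a b => (a, b) ∈ EdgSet σ ∪ EdgSet σ' ∪ {x.2}) σbar) :
    ∃ i j : Fin (n + 3), i < j ∧ x.2 = (σbar i, σbar j) ∧
      x.1 = s(σbar ∘ Fin.succAbove j, σbar ∘ Fin.succAbove i) := by
  obtain ⟨σ, σ', hx1, ⟨hσ, hσ', i0, i0', hface, hne0, hcases⟩, hcomp⟩ := hx
  -- counting : EdgSet σbar = EdgSet σ ∪ EdgSet σ' ∪ {x.2}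
  have hτinj : Function.Injective (σ ∘ i0.succAbove) :=
    hσ.1.comp Fin.succAbove_right_injective
  have hEτ : EdgSet (σ ∘ i0.succAbove) ⊆ EdgSet σ ∩ EdgSet σ' := by
    rintro p ⟨a, b, hab, rfl⟩
    constructor
    · exact ⟨i0.succAbove a, i0.succAbove b, Fin.strictMono_succAbove i0 hab, rfl⟩
    · exact ⟨i0'.succAbove a, i0'.succAbove b, Fin.strictMono_succAbove i0' hab,
        Prod.ext (congrFun hface a) (congrFun hface b)⟩
  have c1 : (EdgSet σ).ncard = (n + 2).choose 2 := ncard_edgSet hσ.1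
  have c2 : (EdgSet σ').ncard = (n + 2).choose 2 := ncard_edgSet hσ'.1
  have cτ : (EdgSet (σ ∘ i0.succAbove)).ncard = (n + 1).choose 2 := ncard_edgSet hτinj
  have hinter : (n + 1).choose 2 ≤ (EdgSet σ ∩ EdgSet σ').ncard := by
    rw [← cτ]; exact Set.ncard_le_ncard hEτ (Set.toFinite _)
  have hu2 : (EdgSet σ ∪ EdgSet σ').ncard + (EdgSet σ ∩ EdgSet σ').ncard
      = (n + 2).choose 2 + (n + 2).choose 2 := by
    rw [Set.ncard_union_add_ncard_inter _ _ (Set.toFinite _) (Set.toFinite _), c1, c2]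
  have hu : (EdgSet σ ∪ EdgSet σ' ∪ {x.2}).ncard ≤ (EdgSet σ ∪ EdgSet σ').ncard + 1 := by
    rw [Set.union_singleton]; exact Set.ncard_insert_le _ _
  have id1 : (n + 3).choose 2 = (n + 2).choose 2 + (n + 2) := by
    simp [Nat.choose_succ_succ (n + 2) 1, Nat.choose_one_right]; ring
  have id2 : (n + 2).choose 2 = (n + 1).choose 2 + (n + 1) := by
    simp [Nat.choose_succ_succ (n + 1) 1, Nat.choose_one_right]; ring
  have hsub : EdgSet σbar ⊆ EdgSet σ ∪ EdgSet σ' ∪ {x.2} := by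
    rintro p ⟨a, b, hab, rfl⟩
    exact hcomp.2 a b hab
  have cbar : (EdgSet σbar).ncard = (n + 3).choose 2 := ncard_edgSet hσbar.1
  have HEdg : EdgSet σbar = EdgSet σ ∪ EdgSet σ' ∪ {x.2} := by
    apply Set.eq_of_subset_of_ncard_le hsub ?_ (Set.toFinite _)
    rw [cbar]; omega
  -- σ and σ' are faces of σbar
  obtain ⟨k, hkσ⟩ := face_of_edges hσbar.1
    (show EdgSet σ ⊆ EdgSet σbar from HEdg ▸ fun p hp => Or.inl (Or.inl hp))
  obtain ⟨k', hk'σ'⟩ := face_of_edges hσbar.1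
    (show EdgSet σ' ⊆ EdgSet σbar from HEdg ▸ fun p hp => Or.inl (Or.inr hp))
  -- identify missing vertices
  have hnotin : σ i0 ∉ Set.range σ' := by
    rintro ⟨c, hc⟩
    by_cases hci : c = i0'
    · exact hne0 ((hci ▸ hc).symm)
    · obtain ⟨a, rfl⟩ : c ∈ Set.range i0'.succAbove := by
        rw [Fin.range_succAbove]; exact hci
      have h2 : σ (i0.succAbove a) = σ i0 := by
        rw [show σ (i0.succAbove a) = σ' (i0'.succAbove a) from congrFun hface a]; exact hc
      exact Fin.succAbove_ne i0 a (hσ.1 h2)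
  have hnotin' : σ' i0' ∉ Set.range σ := by
    rintro ⟨c, hc⟩
    by_cases hci : c = i0
    · exact hne0 (hci ▸ hc)
    · obtain ⟨a, rfl⟩ : c ∈ Set.range i0.succAbove := by
        rw [Fin.range_succAbove]; exact hci
      have h2 : σ' (i0'.succAbove a) = σ' i0' := by
        rw [← show σ (i0.succAbove a) = σ' (i0'.succAbove a) from congrFun hface a]; exact hc
      exact Fin.succAbove_ne i0' a (hσ'.1 h2)
  have hk1 : k.succAbove i0 = k' := by
    by_contra hne2
    obtain ⟨a, ha⟩ : k.succAbove i0 ∈ Set.range k'.succAbove := by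
      rw [Fin.range_succAbove]; exact hne2
    refine hnotin ⟨a, ?_⟩
    rw [hk'σ']
    show σbar (k'.succAbove a) = σ i0
    rw [ha, hkσ]; rfl
  have hk2 : k'.succAbove i0' = k := by
    by_contra hne2
    obtain ⟨a, ha⟩ : k'.succAbove i0' ∈ Set.range k.succAbove := by
      rw [Fin.range_succAbove]; exact hne2
    refine hnotin' ⟨a, ?_⟩
    rw [hkσ]
    show σbar (k.succAbove a) = σ' i0'
    rw [ha, hk'σ']; rfl
  have claim1 : σ i0 = σbar k' := by rw [hkσ]; show σbar (k.succAbove i0) = σbar k'; rw [hk1]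
  have claim2 : σ' i0' = σbar k := by rw [hk'σ']; show σbar (k'.succAbove i0') = σbar k; rw [hk2]
  have he : x.2 ∈ EdgSet σbar := HEdg ▸ Or.inr rfl
  obtain ⟨p, q, hpq, heq⟩ := he
  rcases hcases with ⟨_, he2⟩ | ⟨_, he2⟩
  · -- x.2 = (σ i0, σ' i0') = (σbar k', σbar k)
    have hx2 : x.2 = (σbar k', σbar k) := by rw [he2, claim1, claim2]
    have hkp : k' = p ∧ k = q := by
      rw [hx2] at heq; simp only [Prod.mk.injEq] at heq
      exact ⟨hσbar.1 heq.1, hσbar.1 heq.2⟩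
    refine ⟨k', k, by rw [hkp.1, hkp.2]; exact hpq, hx2, ?_⟩
    rw [hx1, hkσ, hk'σ']
  · have hx2 : x.2 = (σbar k, σbar k') := by rw [he2, claim2, claim1]
    have hkp : k = p ∧ k' = q := by
      rw [hx2] at heq; simp only [Prod.mk.injEq] at heq
      exact ⟨hσbar.1 heq.1, hσbar.1 heq.2⟩
    refine ⟨k, k', by rw [hkp.1, hkp.2]; exact hpq, hx2, ?_⟩
    rw [hx1, hkσ, hk'σ']
    exact Sym2.eq_swap

lemma mem_of_edge {V : Type*} (E : V → V → Prop)
    {n : ℕ} {σbar : Fin (n + 3) → V} (hσbar : IsSimplex E σbar)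
    {i j : Fin (n + 3)} (hij : i < j) :
    ∃ σ σ' : Fin (n + 2) → V,
      (s(σbar ∘ Fin.succAbove j, σbar ∘ Fin.succAbove i) : Sym2 (Fin (n + 2) → V)) = s(σ, σ') ∧
      IsAlmostSimplex E σ σ' (σbar i, σbar j) ∧
      IsSimplex (fun a b => (a, b) ∈ EdgSet σ ∪ EdgSet σ' ∪ {(σbar i, σbar j)}) σbar := by
  have hijv : (i : ℕ) < (j : ℕ) := hij
  have hjv : (j : ℕ) < n + 3 := j.isLt
  refine ⟨σbar ∘ j.succAbove, σbar ∘ i.succAbove, rfl, ?_, ?_⟩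
  · -- IsAlmostSimplex
    have hi0 : (i : ℕ) < n + 2 := by omega
    have hi0' : (j : ℕ) - 1 < n + 2 := by omega
    have hlt1 : Fin.castSucc (⟨(i : ℕ), hi0⟩ : Fin (n + 2)) < j := by
      rw [Fin.lt_def]; simpa using hijv
    have hle2 : i ≤ Fin.castSucc (⟨(j : ℕ) - 1, hi0'⟩ : Fin (n + 2)) := by
      rw [Fin.le_def]; simp; omega
    have h1 : j.succAbove ⟨(i : ℕ), hi0⟩ = i := by
      rw [Fin.succAbove_of_castSucc_lt _ _ hlt1]; ext; simp
    have h2 : i.succAbove ⟨(j : ℕ) - 1, hi0'⟩ = j := by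
      rw [Fin.succAbove_of_le_castSucc _ _ hle2]; ext; simp; omega
    set i0 : Fin (n + 2) := ⟨(i : ℕ), hi0⟩
    set i0' : Fin (n + 2) := ⟨(j : ℕ) - 1, hi0'⟩
    refine ⟨⟨hσbar.1.comp Fin.succAbove_right_injective,
        fun a b hab => hσbar.2 _ _ (Fin.strictMono_succAbove j hab)⟩,
      ⟨hσbar.1.comp Fin.succAbove_right_injective,
        fun a b hab => hσbar.2 _ _ (Fin.strictMono_succAbove i hab)⟩,
      i0, i0', ?_, ?_, Or.inl ⟨by rw [Fin.le_def]; simp [i0, i0']; omega, ?_⟩⟩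
    · -- common face
      have hm1 : StrictMono (j.succAbove ∘ i0.succAbove) :=
        (Fin.strictMono_succAbove j).comp (Fin.strictMono_succAbove i0)
      have hm2 : StrictMono (i.succAbove ∘ i0'.succAbove) :=
        (Fin.strictMono_succAbove i).comp (Fin.strictMono_succAbove i0')
      have hr : Set.range (j.succAbove ∘ i0.succAbove)
          = Set.range (i.succAbove ∘ i0'.succAbove) := by
        rw [Set.range_comp, Set.range_comp, Fin.range_succAbove, Fin.range_succAbove,
          Set.compl_eq_univ_diff, Set.compl_eq_univ_diff,
          Set.image_diff Fin.succAbove_right_injective,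
          Set.image_diff Fin.succAbove_right_injective,
          Set.image_univ, Set.image_univ, Fin.range_succAbove, Fin.range_succAbove,
          Set.image_singleton, Set.image_singleton, h1, h2]
        ext c
        simp only [Set.mem_diff, Set.mem_compl_iff, Set.mem_singleton_iff]
        tauto
      have hfe := strictMono_range_inj_fin hm1 hm2 hr
      show σbar ∘ (j.succAbove ∘ i0.succAbove) = σbar ∘ (i.succAbove ∘ i0'.succAbove)
      rw [hfe]
    · -- distinct missing vertices
      show σbar (j.succAbove i0) ≠ σbar (i.succAbove i0')
      rw [h1, h2]
      exact fun h => absurd (hσbar.1 h) hij.ne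
    · show (σbar i, σbar j) = (σbar (j.succAbove i0), σbar (i.succAbove i0'))
      rw [h1, h2]
  · -- completion
    refine ⟨hσbar.1, fun a b hab => ?_⟩
    by_cases hbj : b = j
    · subst hbj
      by_cases hai : a = i
      · subst hai
        exact Or.inr rfl
      · exact Or.inl (Or.inr (edg_face_mem σbar i hab hai hij.ne'))
    · by_cases haj : a = j
      · subst haj
        refine Or.inl (Or.inr (edg_face_mem σbar i hab ?_ ?_))
        · exact hij.ne'
        · exact fun h => absurd (h ▸ hab) (not_lt.mpr hij.le)
      · exact Or.inl (Or.inl (edg_face_mem σbar j hab haj hbj))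

/-- **Lemma 2.** Let `σ̄` be a `d`-simplex (`d = n+2 ≥ 2`) in a simple directed graph.
The almost-`d`-simplices `({σ, σ'}, e)` (encoded as an unordered pair in `Sym2` together
with the missing pair `e`) whose unique completion is `σ̄` — i.e. such that `σ̄` is a
simplex of the graph with edges `Edg(σ) ∪ Edg(σ') ∪ {e}` — are in bijection with the
edges of `σ̄` via `({σ, σ'}, e) ↦ e`; in particular there are exactly
`C(d+1, 2) = (d² + d)/2` of them. -/
theorem almost_simplices_completing_to_simplex {V : Type*} [Fintype V]
    (E : V → V → Prop) (hE : Irreflexive E)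
    (n : ℕ) (σbar : Fin (n + 3) → V) (hσbar : IsSimplex E σbar) :
    Set.BijOn Prod.snd
      {x : Sym2 (Fin (n + 2) → V) × (V × V) |
        ∃ σ σ', x.1 = s(σ, σ') ∧ IsAlmostSimplex E σ σ' x.2 ∧
          IsSimplex (fun a b => (a, b) ∈ EdgSet σ ∪ EdgSet σ' ∪ {x.2}) σbar}
      (EdgSet σbar) ∧
    {x : Sym2 (Fin (n + 2) → V) × (V × V) |
        ∃ σ σ', x.1 = s(σ, σ') ∧ IsAlmostSimplex E σ σ' x.2 ∧
          IsSimplex (fun a b => (a, b) ∈ EdgSet σ ∪ EdgSet σ' ∪ {x.2}) σbar}.ncard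
      = Nat.choose (n + 3) 2 ∧
    (EdgSet σbar).ncard = Nat.choose (n + 3) 2 := by
  have hBij : Set.BijOn Prod.snd
      {x : Sym2 (Fin (n + 2) → V) × (V × V) |
        ∃ σ σ', x.1 = s(σ, σ') ∧ IsAlmostSimplex E σ σ' x.2 ∧
          IsSimplex (fun a b => (a, b) ∈ EdgSet σ ∪ EdgSet σ' ∪ {x.2}) σbar}
      (EdgSet σbar) := by
    refine ⟨?_, ?_, ?_⟩
    · intro x hx
      obtain ⟨i, j, hij, h2, _⟩ := structure_lemma E hσbar x hx
      show x.2 ∈ EdgSet σbar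
      rw [h2]
      exact ⟨i, j, hij, rfl⟩
    · intro x hx y hy hxy
      obtain ⟨i, j, hij, h2, h3⟩ := structure_lemma E hσbar x hx
      obtain ⟨i', j', hij', h2', h3'⟩ := structure_lemma E hσbar y hy
      have heq : (σbar i, σbar j) = (σbar i', σbar j') := by
        rw [← h2, ← h2']; exact hxy
      simp only [Prod.mk.injEq] at heq
      have e1 := hσbar.1 heq.1
      have e2 := hσbar.1 heq.2
      subst e1; subst e2
      exact Prod.ext (h3.trans h3'.symm) (h2.trans h2'.symm)
    · rintro e ⟨i, j, hij, rfl⟩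
      exact ⟨(s(σbar ∘ Fin.succAbove j, σbar ∘ Fin.succAbove i), (σbar i, σbar j)),
        mem_of_edge E hσbar hij, rfl⟩
  have cbar : (EdgSet σbar).ncard = (n + 3).choose 2 := ncard_edgSet hσbar.1
  refine ⟨hBij, ?_, cbar⟩
  have h4 := cbar
  rw [← hBij.image_eq, Set.ncard_image_of_injOn hBij.injOn] at h4
  exact h4
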